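/- For the hyper-Catalan numbers C[m_2,...,m_q] = (Σ k·m_k)! / ((1+Σ(k−1)m_k)! Π m_k!), the series S = Σ_m C[m] t^m over ℚ[[t_2,...,t_q]] satisfies the recursion on coefficients implied by S = 1 + Σ_{k=2}^q t_k S^k; in particular, C[m] = Σ over decompositions of m minus one k-gon into k types, summed over k, for m ≠ 0, and C[0] = 1. -/

import Mathlib

/-- The index type of the variables `t_2, …, t_q`. -/
abbrev TIdx (q : ℕ) := {k : ℕ // k ∈ Finset.Icc 2 q}

/-- The hyper-Catalan number `C[m] = (Σ k·m_k)! / ((1 + Σ(k−1)m_k)! · Π m_k!)`,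
as a rational number. -/
noncomputable def hyperCatalan (q : ℕ) (m : TIdx q →₀ ℕ) : ℚ :=
  (Nat.factorial (m.sum fun k mk => (k : ℕ) * mk) : ℚ) /
    ((Nat.factorial (1 + m.sum fun k mk => ((k : ℕ) - 1) * mk) : ℚ) *
      ∏ k ∈ m.support, (Nat.factorial (m k) : ℚ))

/-- The hyper-Catalan generating series `S = Σ_m C[m] t^m` over `ℚ[[t_2,…,t_q]]`. -/
noncomputable def hyperCatalanSeries (q : ℕ) : MvPowerSeries (TIdx q) ℚ :=
  fun m => hyperCatalan q m

namespace HCaux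

variable {q : ℕ}

def Em (m : TIdx q →₀ ℕ) : ℕ := ∑ k : TIdx q, (k : ℕ) * m k
def Fm (m : TIdx q →₀ ℕ) : ℕ := ∑ k : TIdx q, ((k : ℕ) - 1) * m k
def Nm (m : TIdx q →₀ ℕ) : ℕ := ∑ k : TIdx q, m k
noncomputable def Pm (m : TIdx q →₀ ℕ) : ℚ := ∏ k : TIdx q, (Nat.factorial (m k) : ℚ)

noncomputable def D (a : ℕ) (m : TIdx q →₀ ℕ) : ℚ :=
  if a = 0 then (if m = 0 then 1 else 0)
  else (a : ℚ) * (Nat.factorial (Em m + a - 1) : ℚ) /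
    ((Nat.factorial (Fm m + a) : ℚ) * Pm m)

lemma two_le (j : TIdx q) : 2 ≤ (j : ℕ) := (Finset.mem_Icc.mp j.2).1

lemma Pm_pos (m : TIdx q →₀ ℕ) : 0 < Pm m :=
  Finset.prod_pos fun k _ => by positivity

lemma Em_add (x y : TIdx q →₀ ℕ) : Em (x + y) = Em x + Em y := by
  simp [Em, mul_add, Finset.sum_add_distrib]

lemma Fm_add (x y : TIdx q →₀ ℕ) : Fm (x + y) = Fm x + Fm y := by
  simp [Fm, mul_add, Finset.sum_add_distrib]

lemma Nm_add (x y : TIdx q →₀ ℕ) : Nm (x + y) = Nm x + Nm y := by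
  simp [Nm, Finset.sum_add_distrib]

lemma Em_single (j : TIdx q) : Em (Finsupp.single j 1) = (j : ℕ) := by
  simp [Em, Finsupp.single_apply]

lemma Fm_single (j : TIdx q) : Fm (Finsupp.single j 1) = (j : ℕ) - 1 := by
  simp [Fm, Finsupp.single_apply]

lemma Nm_single (j : TIdx q) : Nm (Finsupp.single j 1) = 1 := by
  simp [Nm, Finsupp.single_apply]

lemma Em_zero : Em (0 : TIdx q →₀ ℕ) = 0 := by simp [Em]
lemma Fm_zero : Fm (0 : TIdx q →₀ ℕ) = 0 := by simp [Fm]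
lemma Pm_zero : Pm (0 : TIdx q →₀ ℕ) = 1 := by simp [Pm]

lemma sub_add {m : TIdx q →₀ ℕ} {j : TIdx q} (h : 1 ≤ m j) :
    (m - Finsupp.single j 1) + Finsupp.single j 1 = m :=
  tsub_add_cancel_of_le (Finsupp.single_le_iff.mpr h)

lemma Em_sub {m : TIdx q →₀ ℕ} {j : TIdx q} (h : 1 ≤ m j) :
    Em (m - Finsupp.single j 1) + (j : ℕ) = Em m := by
  conv_rhs => rw [← sub_add h]
  rw [Em_add, Em_single]

lemma Fm_sub {m : TIdx q →₀ ℕ} {j : TIdx q} (h : 1 ≤ m j) :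
    Fm (m - Finsupp.single j 1) + (j : ℕ) = Fm m + 1 := by
  have h2 := two_le j
  conv_rhs => rw [← sub_add h]
  rw [Fm_add, Fm_single]
  omega

lemma Em_eq (m : TIdx q →₀ ℕ) : Em m = Fm m + Nm m := by
  unfold Em Fm Nm
  rw [← Finset.sum_add_distrib]
  refine Finset.sum_congr rfl fun k _ => ?_
  obtain ⟨s, hs⟩ : ∃ s, (k : ℕ) = s + 1 := ⟨(k : ℕ) - 1, by have := two_le k; omega⟩
  rw [hs]
  simp [Nat.add_sub_cancel, add_mul, one_mul]

lemma Em_pos {m : TIdx q →₀ ℕ} (hm : m ≠ 0) : 1 ≤ Em m := by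
  obtain ⟨k, hk⟩ : ∃ k, m k ≠ 0 := by
    by_contra h
    push_neg at h
    exact hm (Finsupp.ext fun k => h k)
  have h1 : (k : ℕ) * m k ≤ Em m :=
    Finset.single_le_sum (f := fun k : TIdx q => (k : ℕ) * m k)
      (fun i _ => Nat.zero_le _) (Finset.mem_univ k)
  have := two_le k
  nlinarith [Nat.one_le_iff_ne_zero.mpr hk]

lemma Pm_sub {m : TIdx q →₀ ℕ} {j : TIdx q} (h : 1 ≤ m j) :
    (m j : ℚ) * Pm (m - Finsupp.single j 1) = Pm m := by
  unfold Pm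
  rw [← Finset.mul_prod_erase Finset.univ _ (Finset.mem_univ j),
    ← Finset.mul_prod_erase Finset.univ
      (fun k => ((m k).factorial : ℚ)) (Finset.mem_univ j)]
  have herase : ∀ k ∈ Finset.univ.erase j,
      ((Nat.factorial ((m - Finsupp.single j 1 : TIdx q →₀ ℕ) k) : ℚ)) = ((m k).factorial : ℚ) := by
    intro k hk
    have hne : k ≠ j := Finset.ne_of_mem_erase hk
    rw [Finsupp.tsub_apply, Finsupp.single_apply, if_neg (fun hh => hne hh.symm)]
    simp
  rw [Finset.prod_congr rfl herase]
  have hj : (m - Finsupp.single j 1 : TIdx q →₀ ℕ) j = m j - 1 := by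
    rw [Finsupp.tsub_apply, Finsupp.single_apply, if_pos rfl]
  rw [hj, ← mul_assoc, ← Nat.cast_mul, Nat.mul_factorial_pred (by omega : m j ≠ 0)]

end HCaux

namespace HCaux2
open HCaux
variable {q : ℕ}

lemma D_eq {a : ℕ} (ha : a ≠ 0) (m : TIdx q →₀ ℕ) :
    D a m = (a : ℚ) * (Nat.factorial (Em m + a - 1) : ℚ) /
      ((Nat.factorial (Fm m + a) : ℚ) * Pm m) := by
  unfold D; rw [if_neg ha]

lemma D_zero_arg (b : ℕ) : D b (0 : TIdx q →₀ ℕ) = 1 := by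
  rcases b with _ | n
  · simp [D]
  · rw [D_eq (Nat.succ_ne_zero n), Em_zero, Fm_zero, Pm_zero]
    have h1 : 0 + (n + 1) - 1 = n := by omega
    have h2 : 0 + (n + 1) = n + 1 := by omega
    rw [h1, h2, Nat.factorial_succ]
    have := Nat.factorial_pos n
    field_simp
    push_cast
    ring

lemma hyperCatalan_eq (m : TIdx q →₀ ℕ) : hyperCatalan q m = D 1 m := by
  rw [D_eq one_ne_zero]
  unfold hyperCatalan
  have h1 : (m.sum fun k mk => (k : ℕ) * mk) = Em m :=
    Finsupp.sum_fintype _ _ (by simp)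
  have h2 : (m.sum fun k mk => ((k : ℕ) - 1) * mk) = Fm m :=
    Finsupp.sum_fintype _ _ (by simp)
  have h3 : (∏ k ∈ m.support, ((m k).factorial : ℚ)) = Pm m := by
    rw [show (∏ k ∈ m.support, ((m k).factorial : ℚ))
        = m.prod (fun _ n => (n.factorial : ℚ)) from rfl]
    exact Finsupp.prod_fintype _ _ (by simp)
  rw [h1, h2, h3]
  have h4 : Em m + 1 - 1 = Em m := by omega
  have h5 : 1 + Fm m = Fm m + 1 := by omega
  rw [h4, h5]
  push_cast
  ring

lemma Rcore (b : ℕ) (m : TIdx q →₀ ℕ) (hm : m ≠ 0) :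
    D (b + 1) m = D b m +
      ∑ j : TIdx q, (if 1 ≤ m j then D (b + (j : ℕ)) (m - Finsupp.single j 1) else 0) := by
  have hE := Em_pos hm
  have hP := Pm_pos m
  have hPne : Pm m ≠ 0 := ne_of_gt hP
  set g : ℚ := ((Nat.factorial (Em m + b - 1) : ℚ)) /
      ((Nat.factorial (Fm m + b + 1) : ℚ) * Pm m) with hg
  have hterm : ∀ j : TIdx q,
      (if 1 ≤ m j then D (b + (j : ℕ)) (m - Finsupp.single j 1) else 0)
        = ((b : ℚ) + (j : ℕ)) * (m j : ℚ) * g := by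
    intro j
    by_cases h : 1 ≤ m j
    · rw [if_pos h]
      have h2 := two_le j
      have hEs := Em_sub h
      have hFs := Fm_sub h
      have hPs := Pm_sub h
      have hPne' : Pm (m - Finsupp.single j 1) ≠ 0 := ne_of_gt (Pm_pos _)
      have hmj : (m j : ℚ) ≠ 0 := Nat.cast_ne_zero.mpr (by omega)
      rw [D_eq (by omega : b + (j : ℕ) ≠ 0)]
      have e1 : Em (m - Finsupp.single j 1) + (b + (j : ℕ)) - 1 = Em m + b - 1 := by omega
      have e2 : Fm (m - Finsupp.single j 1) + (b + (j : ℕ)) = Fm m + b + 1 := by omega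
      rw [e1, e2, hg, ← hPs]
      have hf1 : ((Nat.factorial (Fm m + b + 1) : ℚ)) ≠ 0 := by
        exact_mod_cast (Nat.factorial_pos _).ne'
      field_simp
      push_cast
      ring
    · rw [if_neg h]
      have : m j = 0 := by omega
      rw [this]
      push_cast
      ring
  rw [Finset.sum_congr rfl (fun j _ => hterm j), ← Finset.sum_mul]
  have hsum : (∑ j : TIdx q, ((b : ℚ) + (j : ℕ)) * (m j : ℚ))
      = (b : ℚ) * (Nm m : ℚ) + (Em m : ℚ) := by
    unfold Em Nm
    push_cast
    rw [Finset.mul_sum, ← Finset.sum_add_distrib]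
    exact Finset.sum_congr rfl fun k _ => by ring
  rw [hsum]
  have hEFN : (Em m : ℚ) = (Fm m : ℚ) + (Nm m : ℚ) := by
    exact_mod_cast congrArg (Nat.cast : ℕ → ℚ) (Em_eq m)
  have hf1 : ((Nat.factorial (Fm m + b + 1) : ℚ)) ≠ 0 := by
    exact_mod_cast (Nat.factorial_pos _).ne'
  rcases Nat.eq_zero_or_pos b with hb | hb
  · subst hb
    simp only [Nat.zero_add, Nat.cast_zero, zero_mul, zero_add]
    rw [show D 0 m = 0 by simp [D, hm]]
    rw [D_eq one_ne_zero, hg]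
    have e1 : Em m + 1 - 1 = Em m := by omega
    have e2 : Em m + 0 - 1 = Em m - 1 := by omega
    have e3 : Fm m + 0 + 1 = Fm m + 1 := by omega
    rw [e1, e2, e3]
    have hfE : ((Nat.factorial (Em m) : ℚ)) = (Em m : ℚ) * ((Nat.factorial (Em m - 1) : ℚ)) := by
      exact_mod_cast (Nat.mul_factorial_pred (by omega : Em m ≠ 0)).symm
    rw [hfE]
    field_simp
    push_cast
    ring
  · obtain ⟨b', rfl⟩ : ∃ b', b = b' + 1 := ⟨b - 1, by omega⟩
    rw [D_eq (by omega : b' + 1 + 1 ≠ 0), D_eq (by omega : b' + 1 ≠ 0), hg]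
    have e1 : Em m + (b' + 1 + 1) - 1 = Em m + b' + 1 := by omega
    have e2 : Fm m + (b' + 1 + 1) = Fm m + b' + 2 := by omega
    have e3 : Em m + (b' + 1) - 1 = Em m + b' := by omega
    have e4 : Fm m + (b' + 1) = Fm m + b' + 1 := by omega
    have e6 : Fm m + b' + 1 + 1 = Fm m + b' + 2 := by omega
    rw [e1, e2, e3, e4]
    simp only [e6]
    have f1 : ((Nat.factorial (Em m + b' + 1) : ℚ))
        = ((Em m : ℚ) + b' + 1) * ((Nat.factorial (Em m + b') : ℚ)) := by
      have := Nat.factorial_succ (Em m + b')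
      push_cast [this]
      ring
    have f2 : ((Nat.factorial (Fm m + b' + 2) : ℚ))
        = ((Fm m : ℚ) + b' + 2) * ((Nat.factorial (Fm m + b' + 1) : ℚ)) := by
      have := Nat.factorial_succ (Fm m + b' + 1)
      push_cast [this]
      ring
    rw [f1, f2]
    have hf3 : ((Nat.factorial (Em m + b') : ℚ)) ≠ 0 := by
      exact_mod_cast (Nat.factorial_pos _).ne'
    have hf4 : ((Nat.factorial (Fm m + b' + 1) : ℚ)) ≠ 0 := by
      exact_mod_cast (Nat.factorial_pos _).ne'
    have hF2 : ((Fm m : ℚ) + b' + 2) ≠ 0 := by positivity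
    field_simp
    rw [hEFN]
    push_cast
    ring

end HCaux2

namespace HCaux3
open HCaux HCaux2
variable {q : ℕ}

noncomputable def DS (a : ℕ) : MvPowerSeries (TIdx q) ℚ := fun m => D a m

lemma coeff_DS (a : ℕ) (m : TIdx q →₀ ℕ) :
    MvPowerSeries.coeff m (DS a) = D a m := rfl

lemma DS_zero : (DS 0 : MvPowerSeries (TIdx q) ℚ) = 1 := by
  apply MvPowerSeries.ext; intro n
  rw [coeff_DS, MvPowerSeries.coeff_one]
  simp [D]

lemma coeff_X_mul (j : TIdx q) (f : MvPowerSeries (TIdx q) ℚ) (m : TIdx q →₀ ℕ) :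
    MvPowerSeries.coeff m (MvPowerSeries.X j * f) =
      if 1 ≤ m j then MvPowerSeries.coeff (m - Finsupp.single j 1) f else 0 := by
  rw [MvPowerSeries.X, MvPowerSeries.coeff_monomial_mul]
  simp [Finsupp.single_le_iff]

lemma Lser (b : ℕ) : (DS (b + 1) : MvPowerSeries (TIdx q) ℚ)
    = DS b + ∑ j : TIdx q, MvPowerSeries.X j * DS (b + (j : ℕ)) := by
  apply MvPowerSeries.ext; intro m
  rw [map_add, map_sum, coeff_DS, coeff_DS]
  have hco : ∀ j : TIdx q,
      MvPowerSeries.coeff m (MvPowerSeries.X j * DS (b + (j : ℕ)))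
        = (if 1 ≤ m j then D (b + (j : ℕ)) (m - Finsupp.single j 1) else 0) := by
    intro j; rw [coeff_X_mul]; split <;> rfl
  rw [Finset.sum_congr rfl fun j _ => hco j]
  by_cases hm : m = 0
  · subst hm
    rw [D_zero_arg, D_zero_arg]
    simp
  · exact Rcore b m hm

lemma coeff_zero_mul (f g : MvPowerSeries (TIdx q) ℚ) :
    MvPowerSeries.coeff 0 (f * g)
      = MvPowerSeries.coeff 0 f * MvPowerSeries.coeff 0 g := by
  simp [MvPowerSeries.coeff_zero_eq_constantCoeff, map_mul]

lemma Wkey : ∀ n a c (m : TIdx q →₀ ℕ), 1 ≤ c → Em m + a ≤ n →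
    MvPowerSeries.coeff m (DS a * DS c) = D (a + c) m := by
  intro n
  induction n with
  | zero =>
    intro a c m hc hle
    have ha : a = 0 := by omega
    subst ha
    rw [DS_zero, one_mul, coeff_DS, Nat.zero_add]
  | succ n ih =>
    intro a c m hc hle
    rcases Nat.eq_zero_or_pos a with ha | ha
    · subst ha
      rw [DS_zero, one_mul, coeff_DS, Nat.zero_add]
    obtain ⟨b, rfl⟩ : ∃ b, a = b + 1 := ⟨a - 1, by omega⟩
    by_cases hm : m = 0
    · subst hm
      rw [coeff_zero_mul, coeff_DS, coeff_DS, D_zero_arg, D_zero_arg, D_zero_arg, one_mul]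
    rw [Lser b, add_mul, map_add, Finset.sum_mul, map_sum]
    have hb : MvPowerSeries.coeff m (DS b * DS c) = D (b + c) m := by
      apply ih _ _ _ hc
      omega
    have hX : ∀ j : TIdx q,
        MvPowerSeries.coeff m (MvPowerSeries.X j * DS (b + (j : ℕ)) * DS c)
          = (if 1 ≤ m j then D ((b + c) + (j : ℕ)) (m - Finsupp.single j 1) else 0) := by
      intro j
      rw [mul_assoc, coeff_X_mul]
      split
      · rename_i h
        have hEs := Em_sub h
        have h2 := two_le j
        rw [ih (b + (j : ℕ)) c _ hc (by omega)]
        congr 1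
        omega
      · rfl
    rw [hb, Finset.sum_congr rfl fun j _ => hX j]
    rw [show b + 1 + c = (b + c) + 1 by omega]
    exact (Rcore (b + c) m hm).symm

lemma DS_one_pow (c : ℕ) (hc : 1 ≤ c) : (DS 1 : MvPowerSeries (TIdx q) ℚ) ^ c = DS c := by
  induction c with
  | zero => omega
  | succ n ih =>
    rcases Nat.eq_zero_or_pos n with hn | hn
    · subst hn
      rw [pow_one]
    · rw [pow_succ, ih hn]
      apply MvPowerSeries.ext; intro m
      rw [Wkey (Em m + n) n 1 m le_rfl le_rfl, coeff_DS]

lemma S_eq : hyperCatalanSeries q = DS 1 := by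
  apply MvPowerSeries.ext; intro m
  show hyperCatalan q m = D 1 m
  exact hyperCatalan_eq m

end HCaux3


/-- The hyper-Catalan series satisfies the recursion on coefficients encoded by
`S = 1 + Σ_{k=2}^q t_k S^k` (in particular `C[0] = 1`, and for `m ≠ 0`, `C[m]` is
a sum over decompositions of `m` minus one `k`-gon into `k` types). -/
theorem stmt_11 (q : ℕ) :
    hyperCatalanSeries q =
      1 + ∑ k : TIdx q, MvPowerSeries.X k * hyperCatalanSeries q ^ (k : ℕ) := by
  have key : (HCaux3.DS 1 : MvPowerSeries (TIdx q) ℚ)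
      = 1 + ∑ k : TIdx q, MvPowerSeries.X k * HCaux3.DS 1 ^ (k : ℕ) := by
    conv_lhs => rw [show (HCaux3.DS 1 : MvPowerSeries (TIdx q) ℚ)
      = HCaux3.DS 0 + ∑ j : TIdx q, MvPowerSeries.X j * HCaux3.DS ((j : ℕ)) from by
        simpa using HCaux3.Lser 0]
    rw [HCaux3.DS_zero]
    congr 1
    apply Finset.sum_congr rfl
    intro k _
    rw [HCaux3.DS_one_pow (k : ℕ) (by have := HCaux.two_le k; omega)]
  rw [HCaux3.S_eq]
  exact key
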